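/- The off-diagonal square bound B^off_□(ρ,ψ) ≥ 0 is sharp: on a 4-cycle there exist ρ with ρᵢ = 1 for all i and a non-constant ψ with alternating sum ψ(x₁)−ψ(x₂)+ψ(x₃)−ψ(x₄) = 0 such that B^off_□(ρ,ψ) = 0 while A_□(ρ,ψ) = (μ/d)Σᵢ gᵢ² θ(ρᵢ,ρ_{i+1}) > 0. -/

import Mathlib

/-- The logarithmic mean `θ(s,t) = ∫₀¹ s^(1-p) t^p dp`. -/
noncomputable def logMean (s t : ℝ) : ℝ := ∫ p in (0:ℝ)..1, s ^ (1 - p) * t ^ p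

/-- Partial derivative of the logarithmic mean in the first argument. -/
noncomputable def logMean₁ (s t : ℝ) : ℝ := deriv (fun u => logMean u t) s

/-- Partial derivative of the logarithmic mean in the second argument. -/
noncomputable def logMean₂ (s t : ℝ) : ℝ := deriv (fun v => logMean s v) t

/-- The deficit `D(s,t;u,v) = u ∂₁θ(s,t) + v ∂₂θ(s,t) - θ(u,v)` in the four-point
inequality for the logarithmic mean. -/
noncomputable def logMeanDeficit (s t u v : ℝ) : ℝ :=
  u * logMean₁ s t + v * logMean₂ s t - logMean u v

open Set Metric Filter
lemma logMean_one_one : logMean 1 1 = 1 := by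
  simp [logMean, Real.one_rpow]

lemma ball_pos {x : ℝ} (hx : x ∈ ball (1:ℝ) (1/2)) : (1/2 : ℝ) < x := by
  rw [mem_ball, Real.dist_eq, abs_lt] at hx; linarith [hx.1]

lemma cont_aux {x : ℝ} (hx : x ≠ 0) (c : ℝ) :
    Continuous fun p : ℝ => x ^ (c - p) := by
  exact continuous_const.rpow (continuous_const.sub continuous_id) (fun p => Or.inl hx)

lemma hasDerivAt_logMean_fst : HasDerivAt (fun u : ℝ => logMean u 1) (1/2) 1 := by
  have key := intervalIntegral.hasDerivAt_integral_of_dominated_loc_of_deriv_le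
    (F := fun u p => u ^ (1 - p) * (1:ℝ) ^ p)
    (F' := fun u p => ((1 - p) * u ^ (1 - p - 1)) * (1:ℝ) ^ p)
    (x₀ := (1:ℝ)) (s := ball (1:ℝ) (1/2)) (a := 0) (b := 1) (μ := MeasureTheory.volume)
    (bound := fun _ => 2) (ball_mem_nhds _ (by norm_num))
    (((eventually_gt_nhds one_pos : ∀ᶠ x : ℝ in nhds 1, 0 < x)).mono fun x hx => by
      have : Continuous fun p : ℝ => x ^ (1 - p) * (1:ℝ) ^ p :=
        (cont_aux hx.ne' 1).mul (continuous_const.rpow continuous_id (fun p => Or.inl one_ne_zero))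
      exact this.aestronglyMeasurable.restrict)
    (by
      have : Continuous fun p : ℝ => (1:ℝ) ^ (1 - p) * (1:ℝ) ^ p := by
        simp only [Real.one_rpow, one_mul]; exact continuous_const
      exact this.intervalIntegrable 0 1)
    (by
      have : Continuous fun p : ℝ => ((1 - p) * (1:ℝ) ^ (1 - p - 1)) * (1:ℝ) ^ p := by
        simp only [Real.one_rpow, mul_one]
        exact (continuous_const.sub continuous_id)
      exact this.aestronglyMeasurable.restrict)
    (Eventually.of_forall fun p hp x hx => by
      have hx2 : (1/2:ℝ) < x := ball_pos hx
      rw [uIoc_of_le (by norm_num : (0:ℝ) ≤ 1)] at hp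
      have hp0 : 0 < p := hp.1
      have hp1 : p ≤ 1 := hp.2
      have h1 : x ^ (1 - p - 1) ≤ (1/2:ℝ) ^ (1 - p - 1) :=
        Real.rpow_le_rpow_of_nonpos (by norm_num) hx2.le (by linarith)
      have h2 : (1/2:ℝ) ^ (1 - p - 1) ≤ 2 := by
        calc (1/2:ℝ) ^ (1 - p - 1) ≤ (1/2:ℝ) ^ (-1:ℝ) :=
              Real.rpow_le_rpow_of_exponent_ge (by norm_num) (by norm_num) (by linarith)
          _ = 2 := by rw [Real.rpow_neg_one]; norm_num
      have hxpos : 0 < x := by linarith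
      have habs : |1 - p| ≤ 1 := by rw [abs_le]; constructor <;> linarith
      calc ‖((1 - p) * x ^ (1 - p - 1)) * (1:ℝ) ^ p‖
          = |1 - p| * x ^ (1 - p - 1) := by
            rw [Real.one_rpow, mul_one, Real.norm_eq_abs, abs_mul,
              abs_of_nonneg (Real.rpow_nonneg hxpos.le _)]
        _ ≤ 1 * 2 :=
            mul_le_mul habs (h1.trans h2) (Real.rpow_nonneg hxpos.le _) zero_le_one
        _ = 2 := one_mul 2)
    (continuous_const.intervalIntegrable 0 1)
    (Eventually.of_forall fun p hp x hx => by
      have hx2 : (1/2:ℝ) < x := ball_pos hx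
      exact ((Real.hasDerivAt_rpow_const (Or.inl (by linarith))).mul_const _))
  have h2 := key.2
  have heq : (∫ p in (0:ℝ)..1, ((1 - p) * (1:ℝ) ^ (1 - p - 1)) * (1:ℝ) ^ p) = 1/2 := by
    simp only [Real.one_rpow, mul_one]
    open intervalIntegral in
    rw [integral_sub intervalIntegrable_const intervalIntegrable_id]
    open intervalIntegral in
    simp [integral_id]
    norm_num
  rw [heq] at h2
  exact h2

lemma hasDerivAt_logMean_snd : HasDerivAt (fun v : ℝ => logMean 1 v) (1/2) 1 := by
  have key := intervalIntegral.hasDerivAt_integral_of_dominated_loc_of_deriv_le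
    (F := fun v p => (1:ℝ) ^ (1 - p) * v ^ p)
    (F' := fun v p => (1:ℝ) ^ (1 - p) * (p * v ^ (p - 1)))
    (x₀ := (1:ℝ)) (s := ball (1:ℝ) (1/2)) (a := 0) (b := 1) (μ := MeasureTheory.volume)
    (bound := fun _ => 2) (ball_mem_nhds _ (by norm_num))
    (((eventually_gt_nhds one_pos : ∀ᶠ x : ℝ in nhds 1, 0 < x)).mono fun x hx => by
      have : Continuous fun p : ℝ => (1:ℝ) ^ (1 - p) * x ^ p :=
        (cont_aux one_ne_zero 1).mul
          (continuous_const.rpow continuous_id (fun p => Or.inl hx.ne'))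
      exact this.aestronglyMeasurable.restrict)
    (by
      have : Continuous fun p : ℝ => (1:ℝ) ^ (1 - p) * (1:ℝ) ^ p := by
        simp only [Real.one_rpow, one_mul]; exact continuous_const
      exact this.intervalIntegrable 0 1)
    (by
      have : Continuous fun p : ℝ => (1:ℝ) ^ (1 - p) * (p * (1:ℝ) ^ (p - 1)) := by
        simp only [Real.one_rpow, one_mul, mul_one]
        exact continuous_id
      exact this.aestronglyMeasurable.restrict)
    (Eventually.of_forall fun p hp x hx => by
      have hx2 : (1/2:ℝ) < x := ball_pos hx
      rw [uIoc_of_le (by norm_num : (0:ℝ) ≤ 1)] at hp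
      have hp0 : 0 < p := hp.1
      have hp1 : p ≤ 1 := hp.2
      have h1 : x ^ (p - 1) ≤ (1/2:ℝ) ^ (p - 1) :=
        Real.rpow_le_rpow_of_nonpos (by norm_num) hx2.le (by linarith)
      have h2 : (1/2:ℝ) ^ (p - 1) ≤ 2 := by
        calc (1/2:ℝ) ^ (p - 1) ≤ (1/2:ℝ) ^ (-1:ℝ) :=
              Real.rpow_le_rpow_of_exponent_ge (by norm_num) (by norm_num) (by linarith)
          _ = 2 := by rw [Real.rpow_neg_one]; norm_num
      have hxpos : 0 < x := by linarith
      have habs : |p| ≤ 1 := by rw [abs_le]; constructor <;> linarith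
      calc ‖(1:ℝ) ^ (1 - p) * (p * x ^ (p - 1))‖
          = |p| * x ^ (p - 1) := by
            rw [Real.one_rpow, one_mul, Real.norm_eq_abs, abs_mul,
              abs_of_nonneg (Real.rpow_nonneg hxpos.le _)]
        _ ≤ 1 * 2 :=
            mul_le_mul habs (h1.trans h2) (Real.rpow_nonneg hxpos.le _) zero_le_one
        _ = 2 := one_mul 2)
    (continuous_const.intervalIntegrable 0 1)
    (Eventually.of_forall fun p hp x hx => by
      have hx2 : (1/2:ℝ) < x := ball_pos hx
      exact ((Real.hasDerivAt_rpow_const (Or.inl (by linarith))).const_mul _))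
  have h2 := key.2
  have heq : (∫ p in (0:ℝ)..1, (1:ℝ) ^ (1 - p) * (p * (1:ℝ) ^ (p - 1))) = 1/2 := by
    simp only [Real.one_rpow, one_mul, mul_one]
    open intervalIntegral in
    simp [integral_id]
  rw [heq] at h2
  exact h2

lemma logMeanDeficit_zero : logMeanDeficit 1 1 1 1 = 0 := by
  have h1 : logMean₁ 1 1 = 1/2 := hasDerivAt_logMean_fst.deriv
  have h2 : logMean₂ 1 1 = 1/2 := hasDerivAt_logMean_snd.deriv
  rw [logMeanDeficit, h1, h2, logMean_one_one]; ring

lemma zmod_sum (f : ZMod 4 → ℝ) : ∑ i : ZMod 4, f i = f 0 + f 1 + f 2 + f 3 := by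
  show ∑ i : Fin 4, f i = _
  exact Fin.sum_univ_four f


/-- Sharpness of `B^off_□ ≥ 0` on a square: with `ρ ≡ 1` there is a non-constant
`ψ` with vanishing alternating sum such that `B^off_□(ρ,ψ) = 0` while
`A_□(ρ,ψ) > 0`. Here `gᵢ = ψ(x_{i+1}) - ψ(xᵢ)` cyclically on `ZMod 4`. -/
theorem square_offdiag_sharp (μ d : ℝ) (hμ : 0 < μ) (hd : 0 < d) :
    ∃ ψ : ZMod 4 → ℝ, (¬ ∃ c : ℝ, ∀ i, ψ i = c) ∧
      (ψ 0 - ψ 1 + ψ 2 - ψ 3 = 0) ∧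
      ((μ / (2*d^2)) * ((ψ 1 - ψ 0) + (ψ 3 - ψ 2))^2 *
            (∑ i : ZMod 4, logMean ((1:ℝ)) ((1:ℝ)))
          + (μ / (2*d^2)) * ∑ i : ZMod 4, (ψ (i+1) - ψ i)^2 *
              logMeanDeficit 1 1 1 1 = 0) ∧
      (μ / d) * ∑ i : ZMod 4, (ψ (i+1) - ψ i)^2 * logMean 1 1 > 0 := by
  have n01 : ¬((0:ZMod 4) = 1) := by decide
  have n02 : ¬((0:ZMod 4) = 2) := by decide
  have n12 : ¬((1:ZMod 4) = 2) := by decide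
  have n21 : ¬((2:ZMod 4) = 1) := by decide
  have n31 : ¬((3:ZMod 4) = 1) := by decide
  have n32 : ¬((3:ZMod 4) = 2) := by decide
  refine ⟨fun j => if j = 1 ∨ j = 2 then 1 else 0, ?_, ?_, ?_, ?_⟩
  · rintro ⟨c, hc⟩
    have h0 := hc 0
    have h1 := hc 1
    simp [n01, n02] at h0 h1
    rw [← h0] at h1; norm_num at h1
  · norm_num [n01, n02, n12, n21, n31, n32]
  · rw [logMeanDeficit_zero]
    simp only [mul_zero, Finset.sum_const_zero, add_zero]
    norm_num [n01, n02, n12, n21, n31, n32]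
  · rw [logMean_one_one]
    have e1 : (1 : ZMod 4) + 1 = 2 := by decide
    have e2 : (2 : ZMod 4) + 1 = 3 := by decide
    have e3 : (3 : ZMod 4) + 1 = 0 := by decide
    rw [zmod_sum]
    rw [e1, e2, e3]
    norm_num [n01, n02, n12, n21, n31, n32]
    positivity
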